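/- Let w ∈ S_{n+1} and let λ = (λ^1,…,λ^{2n−1}) be a sequence of partitions. Then the number of sequences (T_1,…,T_{2n−1}) of semistandard Young tableaux such that the shape of T_i is the conjugate (λ^i)', the entries of T_i are at most min(i, 2n−i), and col(T_1)⋯col(T_{2n−1}) is a reduced word for w, equals Σ ∏_{i=1}^{2n−1} N(u_i, λ^i), where the sum is over all reduced factorizations u_1 u_2 ⋯ u_{2n−1} = w (meaning the product equals w and Σ ℓ(u_i) = ℓ(w)) with u_i ∈ S_{min(i,2n−i)+1} for each i, and N(u, α) denotes the number of semistandard Young tableaux of shape α' whose column word is a reduced word for u. -/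

import Mathlib

open scoped Classical

noncomputable section

namespace SchubertQuiver

/-- We model the symmetric group `S_∞` as permutations of `ℕ`, acting on the points
`1, 2, 3, …` (the point `0` is fixed by all permutations we consider). -/
abbrev Perm' := Equiv.Perm ℕ

/-- The simple transposition `s i = (i, i+1)`. -/
def sT (i : ℕ) : Perm' := Equiv.swap i (i + 1)

/-- The product `s_{e₁} ⋯ s_{e_ℓ}` associated to a word `(e₁, …, e_ℓ)`. -/
def wordProd (l : List ℕ) : Perm' := (l.map sT).prod

/-- The Coxeter length of a permutation: the least length of a word expressing it. -/
def len (w : Perm') : ℕ := sInf {m | ∃ l : List ℕ, wordProd l = w ∧ l.length = m}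

/-- `l` is a reduced word for `w`. -/
def IsReducedWord (w : Perm') (l : List ℕ) : Prop := wordProd l = w ∧ l.length = len w

/-- `w ∈ S_N`: the permutation `w` permutes `{1, …, N}` (and fixes everything else). -/
def MemS (N : ℕ) (w : Perm') : Prop := w 0 = 0 ∧ ∀ k, N < k → w k = k

/-- The longest element of `S_N`, i.e. `i ↦ N + 1 - i` on `{1, …, N}`. -/
def longest (N : ℕ) : Perm' :=
  Function.Involutive.toPerm (fun k => if 1 ≤ k ∧ k ≤ N then N + 1 - k else k)
    (by intro k; dsimp only; split_ifs <;> omega)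

/-! ### Single and double Schubert polynomials, as families satisfying the
defining divided-difference recursion. -/

abbrev SPoly := MvPolynomial ℕ ℤ

open MvPolynomial in
/-- `S` is the family of single Schubert polynomials `w ↦ 𝔖_w(X)` (in the variables
`x₁, x₂, …`, where `x_i` is the variable `X i`): it satisfies
`𝔖_{w₀} = x₁^{N-1} ⋯ x_{N-1}` for the longest element `w₀` of each `S_N`, and the
divided-difference recursion `∂_i 𝔖_{w sᵢ} = 𝔖_w` whenever `ℓ(w sᵢ) = ℓ(w) + 1`,
stated in the division-free form
`(x_i - x_{i+1}) · 𝔖_w = 𝔖_{w sᵢ} - (𝔖_{w sᵢ} with x_i, x_{i+1} exchanged)`. -/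
structure IsSchubertFamily (S : Perm' → SPoly) : Prop where
  base : ∀ N : ℕ, S (longest N) = ∏ i ∈ Finset.Icc 1 N, (X i : SPoly) ^ (N - i)
  step : ∀ (w : Perm') (i : ℕ), 1 ≤ i → len (w * sT i) = len w + 1 →
    (X i - X (i + 1)) * S w =
      S (w * sT i) - rename (Equiv.swap i (i + 1) : ℕ → ℕ) (S (w * sT i))

abbrev DPoly := MvPolynomial (ℕ ⊕ ℕ) ℤ

/-- The variable `x_i`. -/
def xv (i : ℕ) : DPoly := MvPolynomial.X (Sum.inl i)
/-- The variable `y_j`. -/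
def yv (j : ℕ) : DPoly := MvPolynomial.X (Sum.inr j)

open MvPolynomial in
/-- `DS` is the family of double Schubert polynomials `w ↦ 𝔖_w(X; Y)`:
`𝔖_{w₀}(X;Y) = ∏_{i+j ≤ N} (x_i - y_j)` for the longest element of each `S_N`, and
the divided-difference recursion (acting on the x-variables) in division-free form. -/
structure IsDoubleSchubertFamily (DS : Perm' → DPoly) : Prop where
  base : ∀ N : ℕ, DS (longest N) =
    ∏ p ∈ (Finset.Icc 1 N ×ˢ Finset.Icc 1 N).filter (fun p : ℕ × ℕ => p.1 + p.2 ≤ N),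
      (xv p.1 - yv p.2)
  step : ∀ (w : Perm') (i : ℕ), 1 ≤ i → len (w * sT i) = len w + 1 →
    (xv i - xv (i + 1)) * DS w =
      DS (w * sT i) -
        rename (Equiv.sumCongr (Equiv.swap i (i + 1)) (Equiv.refl ℕ) : ℕ ⊕ ℕ → ℕ ⊕ ℕ)
          (DS (w * sT i))

/-! ### Schur determinants -/

variable {A : Type} [CommRing A]

/-- The elements `h_k` determined by
`Σ_k h_k t^k = (1 - d₁ t + d₂ t² - ⋯) / (1 - c₁ t + c₂ t² - ⋯)`.
(The value of `c 0`, `d 0` is ignored; the constant terms of both series are `1`.) -/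
def hSeq (c d : ℕ → A) (k : ℕ) : A :=
  PowerSeries.coeff k
    ((PowerSeries.mk fun j => if j = 0 then 1 else (-1) ^ j * d j) *
      PowerSeries.invOfUnit (PowerSeries.mk fun j => if j = 0 then 1 else (-1) ^ j * c j) 1)

/-- `h_k` for an integer index, with `h_k = 0` for `k < 0`. -/
def hZ (c d : ℕ → A) (k : ℤ) : A := if k < 0 then 0 else hSeq c d k.toNat

/-- The Schur determinant `s_μ(c - d) = det(h_{μ_i + j - i})`, the determinant being of
size the number of (nonzero) rows of `μ`. -/
def schurDet (c d : ℕ → A) (μ : YoungDiagram) : A :=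
  Matrix.det (Matrix.of fun i j : Fin (μ.colLen 0) =>
    hZ c d ((μ.rowLen i : ℤ) + (j : ℤ) - (i : ℤ)))

/-! ### Column words of semistandard tableaux

Mathlib's `SemistandardYoungTableau` has entries in `ℕ = {0, 1, 2, …}`; we identify a
tableau with positive entries (as in the paper) with a Mathlib tableau via the shift
`e ↦ e - 1`.  Thus the letter recorded in the column word of a cell with (Mathlib) entry
`e` is `e + 1`, and "the entries of `T` are at most `m`" becomes `T i j + 1 ≤ m`. -/

/-- The column word of a semistandard Young tableau: the entries of each column are read
from bottom to top, the columns being taken from left to right (entries shifted by `+1`,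
see above). -/
def colWord {μ : YoungDiagram} (T : SemistandardYoungTableau μ) : List ℕ :=
  (List.range (μ.rowLen 0)).flatMap fun j =>
    ((List.range (μ.colLen j)).reverse).map fun i => T i j + 1

/-! ### Universal Schubert polynomials -/

/-- The index type for the coefficients `a_{i₁, …, i_n}`: sequences `(i₁, …, i_n)` with
`0 ≤ i_α ≤ α`; the component at `t : Fin n` is `i_{t+1} ∈ {0, …, t+1}`. -/
abbrev Seqs (n : ℕ) := ∀ t : Fin n, Fin (t.1 + 2)

/-- The elementary symmetric polynomial `e_k(x₁, …, x_j)`. -/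
def eP (k j : ℕ) : SPoly :=
  ∑ s ∈ Finset.powersetCard k (Finset.Icc 1 j), ∏ i ∈ s, MvPolynomial.X i

/-- The monomial `c_i(j)` in the polynomial ring on variables indexed by `ℕ × ℕ`
(with the convention `c_0(j) = 1`). -/
def cM (i j : ℕ) : MvPolynomial (ℕ × ℕ) ℤ := if i = 0 then 1 else MvPolynomial.X (i, j)

/-- `U` is the family of single universal Schubert polynomials (with respect to `n`)
in the abstract variables `c_i(j) = X (i, j)`, `1 ≤ i ≤ j ≤ n`, attached to the single
Schubert family `S`: for `w ∈ S_{n+1}` there are (uniquely determined) integers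
`a_{i₁,…,i_n}`, supported on sequences with `Σ i_α = ℓ(w)` and `i_α ≤ α`, with
`𝔖_w(X) = Σ a_{i₁,…,i_n} e_{i₁}(x₁) ⋯ e_{i_n}(x₁,…,x_n)` and
`𝔖_w(c) = Σ a_{i₁,…,i_n} c_{i₁}(1) ⋯ c_{i_n}(n)`. -/
def IsUnivFamily (n : ℕ) (S : Perm' → SPoly) (U : Perm' → MvPolynomial (ℕ × ℕ) ℤ) : Prop :=
  ∀ w : Perm', MemS (n + 1) w → ∃ a : Seqs n → ℤ,
    (∀ q : Seqs n, a q ≠ 0 → (∑ t : Fin n, ((q t : ℕ))) = len w) ∧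
    S w = ∑ q : Seqs n, MvPolynomial.C (a q) * ∏ t : Fin n, eP (q t) (t.1 + 1) ∧
    U w = ∑ q : Seqs n, MvPolynomial.C (a q) * ∏ t : Fin n, cM (q t) (t.1 + 1)

/-- Substitute the alphabet `f` (i.e. `c_i(j) := f i j`) into a universal polynomial. -/
def substA (f : ℕ → ℕ → A) (p : MvPolynomial (ℕ × ℕ) ℤ) : A :=
  MvPolynomial.aeval (fun ij : ℕ × ℕ => f ij.1 ij.2) p

/-- The double universal Schubert polynomial
`𝔖_w(c; d) = Σ_{u·v=w} (-1)^{ℓ(u)} 𝔖_{u⁻¹}(d) 𝔖_v(c)`, the sum being over all reduced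
factorizations `u·v = w`, evaluated on the two alphabets `cA` and `dA`. -/
def dblU (U : Perm' → MvPolynomial (ℕ × ℕ) ℤ) (cA dA : ℕ → ℕ → A) (w : Perm') : A :=
  ∑ᶠ uv : Perm' × Perm',
    if uv.1 * uv.2 = w ∧ len uv.1 + len uv.2 = len w then
      (-1 : A) ^ len uv.1 * substA dA (U uv.1⁻¹) * substA cA (U uv.2)
    else 0

/-! ### Auxiliary Coxeter-combinatorics development for the proof -/

lemma wordProd_nil : wordProd [] = 1 := rfl

lemma wordProd_cons (e : ℕ) (l : List ℕ) : wordProd (e :: l) = sT e * wordProd l := by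
  simp [wordProd]

lemma wordProd_append (a b : List ℕ) : wordProd (a ++ b) = wordProd a * wordProd b := by
  simp [wordProd]

lemma sT_mul_self (e : ℕ) : sT e * sT e = 1 := by
  simp [sT]

lemma sT_apply_of_ne (e k : ℕ) (h1 : k ≠ e) (h2 : k ≠ e + 1) : sT e k = k :=
  Equiv.swap_apply_of_ne_of_ne h1 h2

lemma perm_apply_inv_self (f : Perm') (x : ℕ) : f (f⁻¹ x) = x := f.apply_symm_apply x

lemma perm_inv_apply_self (f : Perm') (x : ℕ) : f⁻¹ (f x) = x := f.symm_apply_apply x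

/-- `w` fixes every point `≥ N`. -/
def Bdd (N : ℕ) (w : Perm') : Prop := ∀ k, N ≤ k → w k = k

lemma Bdd.mono {N N' : ℕ} {w : Perm'} (h : Bdd N w) (hN : N ≤ N') : Bdd N' w :=
  fun k hk => h k (le_trans hN hk)

lemma Bdd.lt {N : ℕ} {w : Perm'} (h : Bdd N w) {k : ℕ} (hk : k < N) : w k < N := by
  by_contra h'
  push_neg at h'
  have h2 : w (w k) = w k := h _ h'
  have := w.injective h2
  omega

lemma Bdd.mul {N : ℕ} {w v : Perm'} (hw : Bdd N w) (hv : Bdd N v) : Bdd N (w * v) := by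
  intro k hk
  simp [Equiv.Perm.mul_apply, hv k hk, hw k hk]

lemma Bdd.sT (e : ℕ) : Bdd (e + 2) (sT e) := by
  intro k hk
  exact sT_apply_of_ne e k (by omega) (by omega)

lemma Bdd.one (N : ℕ) : Bdd N 1 := fun k _ => rfl

lemma bdd_wordProd (l : List ℕ) : ∃ N, Bdd N (wordProd l) := by
  induction l with
  | nil => exact ⟨0, Bdd.one 0⟩
  | cons e l ih =>
    obtain ⟨N, hN⟩ := ih
    refine ⟨max (e + 2) N, ?_⟩
    rw [wordProd_cons]
    exact Bdd.mul ((Bdd.sT e).mono (le_max_left _ _)) (hN.mono (le_max_right _ _))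

lemma Bdd.inv {N : ℕ} {w : Perm'} (h : Bdd N w) : Bdd N w⁻¹ := by
  intro k hk
  have := h k hk
  exact w.injective (by simp [perm_apply_inv_self, this])

/-- Inversion set. -/
def invSet (w : Perm') : Set (ℕ × ℕ) := {p | p.1 < p.2 ∧ w p.2 < w p.1}

def inv' (w : Perm') : ℕ := (invSet w).ncard

lemma invSet_subset {N : ℕ} {w : Perm'} (h : Bdd N w) :
    invSet w ⊆ Set.Iio N ×ˢ Set.Iio N := by
  rintro ⟨i, j⟩ ⟨hij, hw⟩
  simp only [Set.mem_prod, Set.mem_Iio]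
  dsimp only at hij hw
  by_cases hj : j < N
  · exact ⟨lt_trans hij hj, hj⟩
  · push_neg at hj
    have hwj : w j = j := h j hj
    by_cases hi : i < N
    · have := h.lt hi
      omega
    · push_neg at hi
      have := h i hi
      omega

lemma invSet_finite {N : ℕ} {w : Perm'} (h : Bdd N w) : (invSet w).Finite :=
  Set.Finite.subset (Set.Finite.prod (Set.finite_Iio N) (Set.finite_Iio N)) (invSet_subset h)

lemma swap_order_preserve {e i j : ℕ} (hij : i < j) (hne : (i, j) ≠ (e, e + 1)) :
    Equiv.swap e (e + 1) i < Equiv.swap e (e + 1) j := by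
  have hd : ∀ x : ℕ, Equiv.swap e (e + 1) x = if x = e then e + 1 else if x = e + 1 then e else x :=
    fun x => Equiv.swap_apply_def e (e + 1) x
  rw [hd i, hd j]
  have : ¬(i = e ∧ j = e + 1) := by
    intro ⟨h1, h2⟩; exact hne (by rw [h1, h2])
  split_ifs <;> omega

lemma mul_sT_apply (w : Perm') (e k : ℕ) : (w * sT e) k = w (Equiv.swap e (e + 1) k) := rfl

lemma invSet_mem_iff (w : Perm') (e : ℕ) {i j : ℕ} (hij : i < j) (hne : (i, j) ≠ (e, e + 1)) :
    (i, j) ∈ invSet (w * sT e) ↔ (Equiv.swap e (e + 1) i, Equiv.swap e (e + 1) j) ∈ invSet w := by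
  constructor
  · rintro ⟨-, h⟩
    exact ⟨swap_order_preserve hij hne, h⟩
  · rintro ⟨-, h⟩
    exact ⟨hij, h⟩

lemma invSet_diff_eq (w : Perm') (e : ℕ) :
    (Prod.map (Equiv.swap e (e + 1)) (Equiv.swap e (e + 1))) ''
      (invSet (w * sT e) \ {(e, e + 1)}) = invSet w \ {(e, e + 1)} := by
  ext q
  constructor
  · rintro ⟨⟨i, j⟩, ⟨hmem, hnotin⟩, rfl⟩
    have hij : i < j := hmem.1
    have hne : (i, j) ≠ (e, e + 1) := by simpa using hnotin
    refine ⟨((invSet_mem_iff w e hij hne).mp hmem), ?_⟩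
    simp only [Set.mem_singleton_iff, Prod.map_apply]
    intro hcontra
    have h1 : Equiv.swap e (e + 1) i = e := congrArg Prod.fst hcontra
    have h2 : Equiv.swap e (e + 1) j = e + 1 := congrArg Prod.snd hcontra
    have : i = e + 1 := by
      have := (Equiv.swap e (e+1)).injective (a₁ := i) (a₂ := e + 1)
      apply this; rw [h1, Equiv.swap_apply_right]
    have : j = e := by
      have := (Equiv.swap e (e+1)).injective (a₁ := j) (a₂ := e)
      apply this; rw [h2, Equiv.swap_apply_left]
    omega
  · rintro ⟨hmem, hnotin⟩
    obtain ⟨a, b⟩ := q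
    have hab : a < b := hmem.1
    have hne : (a, b) ≠ (e, e + 1) := by simpa using hnotin
    refine ⟨(Equiv.swap e (e + 1) a, Equiv.swap e (e + 1) b), ⟨?_, ?_⟩, ?_⟩
    · rw [invSet_mem_iff w e (swap_order_preserve hab hne) ?_]
      · simpa [Equiv.swap_apply_self] using hmem
      · intro hcontra
        have h1 : Equiv.swap e (e + 1) a = e := congrArg Prod.fst hcontra
        have h2 : Equiv.swap e (e + 1) b = e + 1 := congrArg Prod.snd hcontra
        have ha : a = e + 1 := by
          apply (Equiv.swap e (e+1)).injective (a₁ := a) (a₂ := e + 1)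
          rw [h1, Equiv.swap_apply_right]
        have hb : b = e := by
          apply (Equiv.swap e (e+1)).injective (a₁ := b) (a₂ := e)
          rw [h2, Equiv.swap_apply_left]
        omega
    · simp only [Set.mem_singleton_iff]
      intro hcontra
      have h1 : Equiv.swap e (e + 1) a = e := congrArg Prod.fst hcontra
      have h2 : Equiv.swap e (e + 1) b = e + 1 := congrArg Prod.snd hcontra
      have ha : a = e + 1 := by
        apply (Equiv.swap e (e+1)).injective (a₁ := a) (a₂ := e + 1)
        rw [h1, Equiv.swap_apply_right]
      have hb : b = e := by
        apply (Equiv.swap e (e+1)).injective (a₁ := b) (a₂ := e)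
        rw [h2, Equiv.swap_apply_left]
      omega
    · simp [Prod.map_apply, Equiv.swap_apply_self]

lemma swap_prod_injective (e : ℕ) :
    Function.Injective (Prod.map (Equiv.swap e (e + 1) : ℕ → ℕ) (Equiv.swap e (e + 1))) :=
  Function.Injective.prodMap (Equiv.injective _) (Equiv.injective _)

lemma ncard_diff_eq (w : Perm') (e : ℕ) :
    (invSet (w * sT e) \ {(e, e + 1)}).ncard = (invSet w \ {(e, e + 1)}).ncard := by
  rw [← invSet_diff_eq w e, Set.ncard_image_of_injective _ (swap_prod_injective e)]

lemma special_mem_iff (w : Perm') (e : ℕ) :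
    (e, e + 1) ∈ invSet (w * sT e) ↔ w e < w (e + 1) := by
  simp only [invSet, Set.mem_setOf_eq, mul_sT_apply]
  rw [Equiv.swap_apply_left, Equiv.swap_apply_right]
  omega

lemma special_mem_iff' (w : Perm') (e : ℕ) :
    (e, e + 1) ∈ invSet w ↔ w (e + 1) < w e := by
  simp only [invSet, Set.mem_setOf_eq]
  omega

lemma inv_mul_sT_of_lt {N : ℕ} {w : Perm'} (h : Bdd N w) {e : ℕ} (hlt : w e < w (e + 1)) :
    inv' (w * sT e) = inv' w + 1 := by
  have hbv : Bdd (max N (e + 2)) (w * sT e) :=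
    Bdd.mul (h.mono (le_max_left _ _)) ((Bdd.sT e).mono (le_max_right _ _))
  have hfv : (invSet (w * sT e)).Finite := invSet_finite hbv
  have hfw : (invSet w).Finite := invSet_finite h
  have hsv : (e, e + 1) ∈ invSet (w * sT e) := (special_mem_iff w e).mpr hlt
  have hsw : (e, e + 1) ∉ invSet w := by
    rw [special_mem_iff']; omega
  have h1 : (invSet (w * sT e) \ {(e, e + 1)}).ncard + 1 = (invSet (w * sT e)).ncard :=
    Set.ncard_diff_singleton_add_one hsv hfv
  have h2 : invSet w \ {(e, e + 1)} = invSet w := by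
    apply Set.diff_singleton_eq_self hsw
  have := ncard_diff_eq w e
  unfold inv'
  rw [← h1, this, h2]

lemma inv_mul_sT_of_gt {N : ℕ} {w : Perm'} (h : Bdd N w) {e : ℕ} (hgt : w (e + 1) < w e) :
    inv' w = inv' (w * sT e) + 1 := by
  have hfw : (invSet w).Finite := invSet_finite h
  have hsv : (e, e + 1) ∉ invSet (w * sT e) := by
    rw [special_mem_iff]; omega
  have hsw : (e, e + 1) ∈ invSet w := (special_mem_iff' w e).mpr hgt
  have h1 : (invSet w \ {(e, e + 1)}).ncard + 1 = (invSet w).ncard :=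
    Set.ncard_diff_singleton_add_one hsw hfw
  have h2 : invSet (w * sT e) \ {(e, e + 1)} = invSet (w * sT e) := by
    apply Set.diff_singleton_eq_self hsv
  have := ncard_diff_eq w e
  unfold inv'
  rw [← h1, ← h2, this]

lemma inv_one : inv' 1 = 0 := by
  have : invSet (1 : Perm') = ∅ := by
    ext ⟨i, j⟩
    simp only [invSet, Set.mem_setOf_eq, Set.mem_empty_iff_false, iff_false]
    intro ⟨h1, h2⟩
    simp only [Equiv.Perm.one_apply] at h2
    omega
  simp [inv', this]

lemma inv_mul_sT_le {N : ℕ} {w : Perm'} (h : Bdd N w) (e : ℕ) :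
    inv' (w * sT e) ≤ inv' w + 1 := by
  rcases lt_trichotomy (w e) (w (e + 1)) with hlt | heq | hgt
  · exact le_of_eq (inv_mul_sT_of_lt h hlt)
  · exact absurd (w.injective heq) (by omega)
  · have := inv_mul_sT_of_gt h hgt
    omega

lemma inv_wordProd_le (l : List ℕ) : inv' (wordProd l) ≤ l.length := by
  induction l using List.reverseRecOn with
  | nil => simp [wordProd_nil, inv_one]
  | append_singleton l e ih =>
    rw [wordProd_append]
    obtain ⟨N, hN⟩ := bdd_wordProd l
    have : wordProd [e] = sT e := by simp [wordProd]
    rw [this]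
    have := inv_mul_sT_le hN e
    simp only [List.length_append, List.length_cons, List.length_nil]
    omega

lemma exists_descent {N : ℕ} {w : Perm'} (h : Bdd N w) (hw : w ≠ 1) :
    ∃ e, w (e + 1) < w e := by
  by_contra hc
  push_neg at hc
  have hmono : StrictMono w := by
    apply strictMono_nat_of_lt_succ
    intro n
    have h1 := hc n
    have h2 : w n ≠ w (n + 1) := fun hh => by have := w.injective hh; omega
    omega
  apply hw
  ext k
  simp only [Equiv.Perm.one_apply]
  -- strict mono bijection of ℕ is the identity
  have hle : ∀ m, m ≤ w m := fun m => hmono.le_apply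
  have hinvmono : StrictMono (w⁻¹ : Perm') := by
    intro a b hab
    by_contra hcon
    push_neg at hcon
    have := hmono.monotone hcon
    rw [perm_apply_inv_self, perm_apply_inv_self] at this
    omega
  have h1 := hle k
  have h2 : k ≤ w⁻¹ k := hinvmono.le_apply
  have h3 : w k ≤ w (w⁻¹ k) := hmono.monotone h2
  rw [perm_apply_inv_self] at h3
  omega

lemma exists_word_of_inv {w : Perm'} (h : ∃ N, Bdd N w) :
    ∃ l : List ℕ, wordProd l = w ∧ l.length = inv' w := by
  obtain ⟨N, hN⟩ := h
  generalize hm : inv' w = m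
  induction m using Nat.strong_induction_on generalizing w N with
  | _ m ih =>
    by_cases hw : w = 1
    · subst hw
      refine ⟨[], wordProd_nil, ?_⟩
      rw [List.length_nil, ← hm, inv_one]
    · obtain ⟨e, he⟩ := exists_descent hN hw
      have hrec := inv_mul_sT_of_gt hN he
      have hbv : Bdd (max N (e + 2)) (w * sT e) :=
        Bdd.mul (hN.mono (le_max_left _ _)) ((Bdd.sT e).mono (le_max_right _ _))
      have hlt : inv' (w * sT e) < m := by omega
      obtain ⟨l, hl1, hl2⟩ := ih (inv' (w * sT e)) hlt (w := w * sT e) (N := max N (e + 2)) hbv rfl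
      refine ⟨l ++ [e], ?_, ?_⟩
      · rw [wordProd_append, hl1]
        have : wordProd [e] = sT e := by simp [wordProd]
        rw [this, mul_assoc, sT_mul_self, mul_one]
      · simp only [List.length_append, List.length_cons, List.length_nil, hl2]
        omega

lemma len_le_length {w : Perm'} {l : List ℕ} (h : wordProd l = w) : len w ≤ l.length :=
  Nat.sInf_le ⟨l, h, rfl⟩

lemma len_eq_inv {w : Perm'} (h : ∃ N, Bdd N w) : len w = inv' w := by
  obtain ⟨l, hl1, hl2⟩ := exists_word_of_inv h
  apply le_antisymm
  · rw [← hl2]; exact len_le_length hl1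
  · unfold len
    have hne : {m | ∃ l : List ℕ, wordProd l = w ∧ l.length = m}.Nonempty :=
      ⟨l.length, l, hl1, rfl⟩
    apply le_csInf hne
    rintro m ⟨l', hl'1, rfl⟩
    rw [← hl'1]
    exact inv_wordProd_le l'

lemma exists_reduced {w : Perm'} (h : ∃ N, Bdd N w) : ∃ l, IsReducedWord w l := by
  obtain ⟨l, hl1, hl2⟩ := exists_word_of_inv h
  exact ⟨l, hl1, by rw [hl2, len_eq_inv h]⟩

lemma len_mul_le {u v : Perm'} (hu : ∃ N, Bdd N u) (hv : ∃ N, Bdd N v) :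
    len (u * v) ≤ len u + len v := by
  obtain ⟨l1, h1, h1'⟩ := exists_reduced hu
  obtain ⟨l2, h2, h2'⟩ := exists_reduced hv
  have : wordProd (l1 ++ l2) = u * v := by rw [wordProd_append, h1, h2]
  have := len_le_length this
  simp only [List.length_append] at this
  omega

lemma len_sT (e : ℕ) : len (sT e) = 1 := by
  have hword : wordProd [e] = sT e := by simp [wordProd]
  have h1 : len (sT e) ≤ 1 := by simpa using len_le_length hword
  have h2 : len (sT e) ≠ 0 := by
    intro h0
    have hne : {m | ∃ l : List ℕ, wordProd l = sT e ∧ l.length = m}.Nonempty := ⟨1, [e], hword, rfl⟩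
    have := Nat.sInf_mem hne
    rw [len] at h0
    rw [h0] at this
    obtain ⟨l, hl1, hl2⟩ := this
    rw [List.length_eq_zero_iff] at hl2
    subst hl2
    rw [wordProd_nil] at hl1
    have : sT e e = e := by rw [← hl1]; rfl
    simp [sT, Equiv.swap_apply_left] at this
  omega

lemma inv_inv_eq (w : Perm') : inv' w⁻¹ = inv' w := by
  have himg : invSet w⁻¹ = (fun p : ℕ × ℕ => (w p.2, w p.1)) '' invSet w := by
    ext ⟨a, b⟩
    constructor
    · rintro ⟨hab, hinv⟩
      dsimp only at hab hinv
      refine ⟨(w⁻¹ b, w⁻¹ a), ⟨hinv, ?_⟩, ?_⟩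
      · dsimp only; rw [perm_apply_inv_self, perm_apply_inv_self]; exact hab
      · dsimp only; rw [perm_apply_inv_self, perm_apply_inv_self]
    · rintro ⟨⟨i, j⟩, ⟨hij, hw⟩, heq⟩
      dsimp only at hij hw heq
      obtain ⟨rfl, rfl⟩ : w j = a ∧ w i = b := ⟨congrArg Prod.fst heq, congrArg Prod.snd heq⟩
      refine ⟨hw, ?_⟩
      dsimp only
      rw [perm_inv_apply_self, perm_inv_apply_self]
      exact hij
  unfold inv'
  rw [himg]
  apply Set.ncard_image_of_injective
  intro p q hpq
  have h1 : w p.2 = w q.2 := congrArg Prod.fst hpq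
  have h2 : w p.1 = w q.1 := congrArg Prod.snd hpq
  exact Prod.ext (w.injective h2) (w.injective h1)

lemma len_one : len (1 : Perm') = 0 := by
  have := len_le_length (w := 1) (l := []) wordProd_nil
  simpa using this

lemma MemS.bdd {N : ℕ} {u : Perm'} (hu : MemS N u) : Bdd (N + 1) u :=
  fun k hk => hu.2 k (by omega)

lemma MemS.inv {N : ℕ} {u : Perm'} (hu : MemS N u) : MemS N u⁻¹ := by
  constructor
  · exact u.injective (by simp [perm_apply_inv_self, hu.1])
  · intro k hk
    exact u.injective (by simp [perm_apply_inv_self, hu.2 k hk])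

lemma MemS.mono {N N' : ℕ} {u : Perm'} (hu : MemS N u) (h : N ≤ N') : MemS N' u :=
  ⟨hu.1, fun k hk => hu.2 k (by omega)⟩

lemma letters_memS {m : ℕ} (l : List ℕ) (h : ∀ e ∈ l, 1 ≤ e ∧ e ≤ m) :
    MemS (m + 1) (wordProd l) := by
  induction l with
  | nil => exact ⟨rfl, fun k _ => rfl⟩
  | cons e l ih =>
    obtain ⟨he1, he2⟩ := h e (List.mem_cons_self)
    have ihl := ih (fun e' he' => h e' (List.mem_cons_of_mem _ he'))
    rw [wordProd_cons]
    constructor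
    · simp only [Equiv.Perm.mul_apply, ihl.1]
      exact sT_apply_of_ne e 0 (by omega) (by omega)
    · intro k hk
      simp only [Equiv.Perm.mul_apply, ihl.2 k hk]
      exact sT_apply_of_ne e k (by omega) (by omega)

lemma reduced_letters {m : ℕ} :
    ∀ (l : List ℕ) (u : Perm'), MemS (m + 1) u → IsReducedWord u l →
      ∀ e ∈ l, 1 ≤ e ∧ e ≤ m := by
  intro l
  induction l with
  | nil => intro u _ _ e he; simp at he
  | cons e l ih =>
    intro u hu hred f hf
    set u' := wordProd l with hu'def
    have hprod : sT e * u' = u := by rw [← hred.1, wordProd_cons]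
    have hlenu : len u = l.length + 1 := by
      have := hred.2; simp only [List.length_cons] at this; omega
    have hbu : Bdd (m + 2) u := hu.bdd
    obtain ⟨N', hN'⟩ := bdd_wordProd l
    have hlenu' : len u' ≤ l.length := len_le_length rfl
    have hle : len u ≤ 1 + len u' := by
      calc len u = len (sT e * u') := by rw [hprod]
        _ ≤ len (sT e) + len u' := len_mul_le ⟨e + 2, Bdd.sT e⟩ ⟨N', hN'⟩
        _ = 1 + len u' := by rw [len_sT]
    have hlen' : len u' = l.length := by omega
    have hredl : IsReducedWord u' l := ⟨rfl, hlen'.symm⟩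
    have huu' : u' = sT e * u := by
      rw [← hprod, ← mul_assoc, sT_mul_self, one_mul]
    -- inversion counting: u'⁻¹ = u⁻¹ * sT e
    have hinveq : u'⁻¹ = u⁻¹ * sT e := by
      rw [huu', mul_inv_rev]
      simp [sT]
    have hbuinv : Bdd (m + 2) u⁻¹ := hbu.inv
    have hbu' : ∃ N, Bdd N u' := ⟨N', hN'⟩
    have hinvu : len u = inv' u⁻¹ := by
      rw [len_eq_inv ⟨m + 2, hbu⟩, inv_inv_eq]
    have hinvu' : len u' = inv' u'⁻¹ := by
      rw [len_eq_inv hbu', inv_inv_eq]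
    -- show descent : u⁻¹ (e+1) < u⁻¹ e
    have hdesc : u⁻¹ (e + 1) < u⁻¹ e := by
      rcases lt_trichotomy (u⁻¹ e) (u⁻¹ (e + 1)) with hl | heq | hg
      · exfalso
        have := inv_mul_sT_of_lt hbuinv hl
        rw [← hinveq] at this
        omega
      · exact absurd ((u⁻¹).injective heq) (by omega)
      · exact hg
    have he1 : 1 ≤ e := by
      rcases Nat.eq_zero_or_pos e with rfl | h
      · exfalso
        have h0 : u⁻¹ 0 = 0 := hu.inv.1
        have h1 : u⁻¹ 1 ≠ 0 := by
          intro hc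
          have : u⁻¹ 0 = u⁻¹ 1 := by rw [h0, hc]
          have := (u⁻¹).injective this
          omega
        omega
      · exact h
    have he2 : e ≤ m := by
      by_contra hc
      push_neg at hc
      rcases Nat.lt_or_ge e (m + 2) with h1 | h1
      · -- e = m + 1
        have he : e = m + 1 := by omega
        have h2 : u⁻¹ (e + 1) = e + 1 := hu.inv.2 (e + 1) (by omega)
        have h3 : u⁻¹ e < m + 2 := hbuinv.lt (by omega)
        omega
      · have h2 : u⁻¹ e = e := hu.inv.2 e (by omega)
        have h3 : u⁻¹ (e + 1) = e + 1 := hu.inv.2 (e + 1) (by omega)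
        omega
    have hu' : MemS (m + 1) u' := by
      rw [huu']
      constructor
      · simp only [Equiv.Perm.mul_apply, hu.1]
        exact sT_apply_of_ne e 0 (by omega) (by omega)
      · intro k hk
        simp only [Equiv.Perm.mul_apply, hu.2 k hk]
        exact sT_apply_of_ne e k (by omega) (by omega)
    rcases List.mem_cons.mp hf with rfl | hfl
    · exact ⟨he1, he2⟩
    · exact ih u' hu' hredl f hfl

lemma wordProd_flatten (L : List (List ℕ)) : wordProd L.flatten = (L.map wordProd).prod := by
  induction L with
  | nil => simp [wordProd_nil]
  | cons a L ih => simp [List.flatten_cons, wordProd_append, ih]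

lemma bdd_listProd (vs : List Perm') (h : ∀ v ∈ vs, ∃ N, Bdd N v) : ∃ N, Bdd N vs.prod := by
  induction vs with
  | nil => exact ⟨0, Bdd.one 0⟩
  | cons v vs ih =>
    obtain ⟨N1, hN1⟩ := h v (List.mem_cons_self)
    obtain ⟨N2, hN2⟩ := ih (fun v' hv' => h v' (List.mem_cons_of_mem _ hv'))
    exact ⟨max N1 N2, by
      rw [List.prod_cons]
      exact Bdd.mul (hN1.mono (le_max_left _ _)) (hN2.mono (le_max_right _ _))⟩

lemma len_listProd_le (vs : List Perm') (h : ∀ v ∈ vs, ∃ N, Bdd N v) :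
    len vs.prod ≤ (vs.map len).sum := by
  induction vs with
  | nil => simp [len_one]
  | cons v vs ih =>
    rw [List.prod_cons, List.map_cons, List.sum_cons]
    have h1 := len_mul_le (h v (List.mem_cons_self))
      (bdd_listProd vs (fun v' hv' => h v' (List.mem_cons_of_mem _ hv')))
    have h2 := ih (fun v' hv' => h v' (List.mem_cons_of_mem _ hv'))
    omega

lemma flatten_reduced {k : ℕ} (ls : Fin k → List ℕ) (w : Perm')
    (h : IsReducedWord w (List.ofFn ls).flatten) :
    (∀ i, IsReducedWord (wordProd (ls i)) (ls i)) ∧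
      (∑ i, len (wordProd (ls i))) = len w ∧
      (List.ofFn fun i => wordProd (ls i)).prod = w := by
  have hmap : (List.ofFn ls).map wordProd = List.ofFn fun i => wordProd (ls i) := by
    rw [List.map_ofFn]; rfl
  have hprod : (List.ofFn fun i => wordProd (ls i)).prod = w := by
    rw [← hmap, ← wordProd_flatten, h.1]
  have hlenflat : (List.ofFn ls).flatten.length = ∑ i, (ls i).length := by
    rw [List.length_flatten, List.map_ofFn]
    exact List.sum_ofFn
  have hlenw : (∑ i, (ls i).length) = len w := by rw [← hlenflat, h.2]
  have hsub : len w ≤ ∑ i, len (wordProd (ls i)) := by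
    rw [← hprod]
    have h1 := len_listProd_le (List.ofFn fun i => wordProd (ls i))
      (fun v hv => by
        rw [List.mem_ofFn] at hv
        obtain ⟨i, rfl⟩ := hv
        exact bdd_wordProd (ls i))
    rw [List.map_ofFn] at h1
    calc len (List.ofFn fun i => wordProd (ls i)).prod
        ≤ (List.ofFn (len ∘ fun i => wordProd (ls i))).sum := h1
      _ = ∑ i, len (wordProd (ls i)) := List.sum_ofFn
  have hpt : ∀ i ∈ Finset.univ, len (wordProd (ls i)) ≤ (ls i).length :=
    fun i _ => len_le_length rfl
  have hsums : (∑ i, len (wordProd (ls i))) = ∑ i, (ls i).length := by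
    have h2 : (∑ i, len (wordProd (ls i))) ≤ ∑ i, (ls i).length :=
      Finset.sum_le_sum hpt
    omega
  have hpteq := (Finset.sum_eq_sum_iff_of_le hpt).mp hsums
  refine ⟨fun i => ⟨rfl, ?_⟩, by omega, hprod⟩
  have h3 := hpteq i (Finset.mem_univ i)
  -- len (wordProd (ls i)) = (ls i).length; want (ls i).length = len (wordProd (ls i))
  omega

lemma flatten_of_pieces {k : ℕ} (ls : Fin k → List ℕ) (us : Fin k → Perm') (w : Perm')
    (hred : ∀ i, IsReducedWord (us i) (ls i))
    (hprod : (List.ofFn us).prod = w) (hsum : (∑ i, len (us i)) = len w) :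
    IsReducedWord w (List.ofFn ls).flatten := by
  constructor
  · rw [wordProd_flatten, List.map_ofFn]
    have : (wordProd ∘ ls) = us := by
      funext i
      exact (hred i).1
    rw [this, hprod]
  · rw [List.length_flatten, List.map_ofFn]
    have h1 : (List.ofFn (List.length ∘ ls)).sum = ∑ i, (ls i).length := List.sum_ofFn
    rw [h1]
    have : ∀ i, (ls i).length = len (us i) := fun i => (hred i).2 ▸ by rw [(hred i).2]
    calc (∑ i, (ls i).length) = ∑ i, len (us i) := by
          apply Finset.sum_congr rfl
          intro i _
          exact (hred i).2
      _ = len w := hsum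

lemma mem_colWord {μ : YoungDiagram} (T : SemistandardYoungTableau μ) {e : ℕ} :
    e ∈ colWord T ↔ ∃ a b, (a, b) ∈ μ ∧ T a b + 1 = e := by
  simp only [colWord, List.mem_flatMap, List.mem_map, List.mem_reverse, List.mem_range]
  constructor
  · rintro ⟨j, _, i, hi, rfl⟩
    exact ⟨i, j, YoungDiagram.mem_iff_lt_colLen.mpr hi, rfl⟩
  · rintro ⟨a, b, hab, rfl⟩
    refine ⟨b, ?_, a, YoungDiagram.mem_iff_lt_colLen.mp hab, rfl⟩
    have h0 : (0, b) ∈ μ := μ.up_left_mem (Nat.zero_le a) le_rfl hab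
    exact YoungDiagram.mem_iff_lt_rowLen.mp h0

lemma colWord_memS {μ : YoungDiagram} (T : SemistandardYoungTableau μ) {m : ℕ}
    (h : ∀ a b, (a, b) ∈ μ → T a b + 1 ≤ m) : MemS (m + 1) (wordProd (colWord T)) := by
  apply letters_memS
  intro e he
  obtain ⟨a, b, hab, rfl⟩ := (mem_colWord T).mp he
  exact ⟨by omega, h a b hab⟩

lemma entries_le_of_reduced {μ : YoungDiagram} {T : SemistandardYoungTableau μ} {m : ℕ}
    {u : Perm'} (hu : MemS (m + 1) u) (hred : IsReducedWord u (colWord T)) :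
    ∀ a b, (a, b) ∈ μ → T a b + 1 ≤ m := by
  intro a b hab
  exact (reduced_letters (colWord T) u hu hred (T a b + 1)
    ((mem_colWord T).mpr ⟨a, b, hab, rfl⟩)).2

lemma memS_finite (N : ℕ) : {v : Perm' | MemS N v}.Finite := by
  have : Finite ↥{v : Perm' | MemS N v} := by
    have hbd : ∀ (v : ↥{v : Perm' | MemS N v}) (k : Fin (N + 1)),
        (v : Perm') k.1 < N + 1 := by
      intro v k
      have hb : Bdd (N + 1) (v : Perm') := MemS.bdd v.2
      exact hb.lt k.2
    apply Finite.of_injective (fun v : ↥{v : Perm' | MemS N v} =>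
      (fun k : Fin (N + 1) => (⟨(v : Perm') k.1, hbd v k⟩ : Fin (N + 1))))
    intro v v' h
    apply Subtype.ext
    apply Equiv.ext
    intro x
    by_cases hx : x < N + 1
    · have := congrFun h ⟨x, hx⟩
      simpa using this
    · push_neg at hx
      rw [v.2.2 x (by omega), v'.2.2 x (by omega)]
  exact Set.finite_coe_iff.mp this

lemma fiber_finite {μ : YoungDiagram} {m : ℕ} {u : Perm'} (hu : MemS (m + 1) u) :
    Finite {T : SemistandardYoungTableau μ // IsReducedWord u (colWord T)} := by
  have hbd : ∀ (T : {T : SemistandardYoungTableau μ // IsReducedWord u (colWord T)})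
      (c : μ.cells), (T : SemistandardYoungTableau μ) c.1.1 c.1.2 < m + 1 := by
    intro T c
    have hc : (c.1.1, c.1.2) ∈ μ := by
      have := c.2
      rw [YoungDiagram.mem_cells] at this
      simpa using this
    have := entries_le_of_reduced hu T.2 c.1.1 c.1.2 hc
    omega
  apply Finite.of_injective (fun T : {T : SemistandardYoungTableau μ //
      IsReducedWord u (colWord T)} =>
    (fun c : μ.cells => (⟨(T : SemistandardYoungTableau μ) c.1.1 c.1.2, hbd T c⟩ : Fin (m + 1))))
  intro T T' h
  apply Subtype.ext
  ext i j
  by_cases hij : (i, j) ∈ μ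
  · have hc : ((i, j) : ℕ × ℕ) ∈ μ.cells := (YoungDiagram.mem_cells _).mpr hij
    have := congrFun h ⟨(i, j), hc⟩
    simpa using this
  · rw [(T : SemistandardYoungTableau μ).zeros hij, (T' : SemistandardYoungTableau μ).zeros hij]

/-- Condition for a reduced factorization. -/
def Pfact (k : ℕ) (mb : Fin k → ℕ) (w : Perm') (us : Fin k → Perm') : Prop :=
  (List.ofFn us).prod = w ∧ (∑ i, len (us i)) = len w ∧
    ∀ i : Fin k, MemS (mb i + 1) (us i)

def theMap (k : ℕ) (mb : Fin k → ℕ) (w : Perm') (lam : Fin k → YoungDiagram) :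
    {T : ∀ i : Fin k, SemistandardYoungTableau (lam i).transpose //
        (∀ i, ∀ a b : ℕ, (a, b) ∈ (lam i).transpose → T i a b + 1 ≤ mb i) ∧
        IsReducedWord w ((List.ofFn fun i => colWord (T i)).flatten)} →
      {us : Fin k → Perm' // Pfact k mb w us} :=
  fun a => ⟨fun i => wordProd (colWord (a.1 i)), by
    obtain ⟨h1, h2⟩ := a.2
    obtain ⟨hred, hsum, hprod⟩ := flatten_reduced (fun i => colWord (a.1 i)) w h2
    exact ⟨hprod, hsum, fun i => colWord_memS (a.1 i) (h1 i)⟩⟩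

def theMap_fiber_equiv (k : ℕ) (mb : Fin k → ℕ) (w : Perm') (lam : Fin k → YoungDiagram)
    (us : {us : Fin k → Perm' // Pfact k mb w us}) :
    {a // theMap k mb w lam a = us} ≃
      (∀ i : Fin k, {T : SemistandardYoungTableau (lam i).transpose //
          IsReducedWord (us.1 i) (colWord T)}) where
  toFun a i := ⟨a.1.1 i, by
    obtain ⟨hred, hsum, hprod⟩ := flatten_reduced (fun i => colWord (a.1.1 i)) w a.1.2.2
    have hcomp : wordProd (colWord (a.1.1 i)) = us.1 i := by
      have := congrArg Subtype.val a.2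
      exact congrFun this i
    rw [← hcomp]
    exact hred i⟩
  invFun Tb := ⟨⟨fun i => (Tb i).1, by
      constructor
      · intro i a b hab
        exact entries_le_of_reduced (us.2.2.2 i) (Tb i).2 a b hab
      · exact flatten_of_pieces (fun i => colWord ((Tb i).1)) us.1 w
          (fun i => (Tb i).2) us.2.1 us.2.2.1⟩, by
    apply Subtype.ext
    funext i
    exact (Tb i).2.1⟩
  left_inv a := Subtype.ext (Subtype.ext rfl)
  right_inv Tb := funext fun i => Subtype.ext rfl

theorem main_aux (k M : ℕ) (mb : Fin k → ℕ) (hmb : ∀ i, mb i ≤ M) (w : Perm')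
    (lam : Fin k → YoungDiagram) :
    Nat.card {T : ∀ i : Fin k, SemistandardYoungTableau (lam i).transpose //
        (∀ i, ∀ a b : ℕ, (a, b) ∈ (lam i).transpose → T i a b + 1 ≤ mb i) ∧
        IsReducedWord w ((List.ofFn fun i => colWord (T i)).flatten)} =
      ∑ᶠ us : Fin k → Perm',
        if Pfact k mb w us then
          ∏ i : Fin k, Nat.card {T : SemistandardYoungTableau (lam i).transpose //
              IsReducedWord (us i) (colWord T)}
        else 0 := by
  classical
  have hPfin : {us : Fin k → Perm' | Pfact k mb w us}.Finite := by
    apply Set.Finite.subset (Set.Finite.pi (fun _ : Fin k => memS_finite (M + 1)))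
    intro us hus
    rw [Set.mem_univ_pi]
    intro i
    exact (hus.2.2 i).mono (by have := hmb i; omega)
  haveI hPfint : Fintype {us : Fin k → Perm' // Pfact k mb w us} := hPfin.fintype
  haveI hfin1 : ∀ (us : {us : Fin k → Perm' // Pfact k mb w us}) (i : Fin k),
      Finite {T : SemistandardYoungTableau (lam i).transpose //
        IsReducedWord (us.1 i) (colWord T)} := fun us i => fiber_finite (us.2.2.2 i)
  haveI hfin2 : ∀ us : {us : Fin k → Perm' // Pfact k mb w us},
      Finite {a // theMap k mb w lam a = us} := fun us =>
    Finite.of_equiv _ (theMap_fiber_equiv k mb w lam us).symm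
  haveI : ∀ us : {us : Fin k → Perm' // Pfact k mb w us},
      Fintype {a // theMap k mb w lam a = us} := fun us => Fintype.ofFinite _
  rw [← Nat.card_congr (Equiv.sigmaFiberEquiv (theMap k mb w lam))]
  rw [Nat.card_eq_fintype_card, Fintype.card_sigma]
  -- now handle the finsum
  have hsupp : (Function.support fun us : Fin k → Perm' =>
      if Pfact k mb w us then
        ∏ i : Fin k, Nat.card {T : SemistandardYoungTableau (lam i).transpose //
            IsReducedWord (us i) (colWord T)}
      else 0) ⊆ {us : Fin k → Perm' | Pfact k mb w us} := by
    intro us hus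
    rw [Function.mem_support] at hus
    by_contra h
    rw [Set.mem_setOf_eq] at h
    rw [if_neg h] at hus
    exact hus rfl
  have hsfin := hPfin.subset hsupp
  rw [finsum_eq_sum _ hsfin]
  have hstep : (∑ x ∈ hsfin.toFinset,
      if Pfact k mb w x then
        ∏ i : Fin k, Nat.card {T : SemistandardYoungTableau (lam i).transpose //
            IsReducedWord (x i) (colWord T)}
      else 0) =
      ∑ x ∈ hPfin.toFinset,
      if Pfact k mb w x then
        ∏ i : Fin k, Nat.card {T : SemistandardYoungTableau (lam i).transpose //
            IsReducedWord (x i) (colWord T)}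
      else 0 := by
    apply Finset.sum_subset
    · intro x hx
      rw [Set.Finite.mem_toFinset] at hx ⊢
      exact hsupp hx
    · intro x _ hx
      rw [Set.Finite.mem_toFinset, Function.mem_support, not_not] at hx
      exact hx
  rw [hstep]
  have hstep2 : (∑ x ∈ hPfin.toFinset,
      if Pfact k mb w x then
        ∏ i : Fin k, Nat.card {T : SemistandardYoungTableau (lam i).transpose //
            IsReducedWord (x i) (colWord T)}
      else 0) =
      ∑ us : {us : Fin k → Perm' // Pfact k mb w us},
      if Pfact k mb w us.1 then
        ∏ i : Fin k, Nat.card {T : SemistandardYoungTableau (lam i).transpose //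
            IsReducedWord (us.1 i) (colWord T)}
      else 0 := by
    apply Finset.sum_subtype hPfin.toFinset
    intro x
    rw [Set.Finite.mem_toFinset]
    rfl
  rw [hstep2]
  apply Finset.sum_congr rfl
  intro us _
  rw [if_pos us.2]
  rw [← Nat.card_eq_fintype_card, Nat.card_congr (theMap_fiber_equiv k mb w lam us),
    Nat.card_pi]

/-- Theorem 1 combined with Theorem 2 of the paper.  The number of
sequences of semistandard tableaux `(T₁, …, T_{2n-1})` with `T_i` of shape `(λ^i)'`,
entries at most `min(i, 2n-i)`, and concatenated column word a reduced word for `w`,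
equals `Σ ∏ᵢ N(uᵢ, λ^i)`, the sum being over all reduced factorizations
`u₁ u₂ ⋯ u_{2n-1} = w` with `uᵢ ∈ S_{min(i,2n-i)+1}`, where `N(u, α)` is the number of
semistandard tableaux of shape `α'` whose column word is a reduced word for `u`. -/
theorem statement14 (n : ℕ) (hn : 1 ≤ n) (w : Perm') (hw : MemS (n + 1) w)
    (lam : Fin (2 * n - 1) → YoungDiagram) :
    Nat.card {T : ∀ i : Fin (2 * n - 1), SemistandardYoungTableau (lam i).transpose //
        (∀ i, ∀ a b : ℕ, (a, b) ∈ (lam i).transpose →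
          T i a b + 1 ≤ min (i.1 + 1) (2 * n - (i.1 + 1))) ∧
        IsReducedWord w ((List.ofFn fun i => colWord (T i)).flatten)} =
      ∑ᶠ us : Fin (2 * n - 1) → Perm',
        if (List.ofFn us).prod = w ∧ (∑ i, len (us i)) = len w ∧
            ∀ i : Fin (2 * n - 1), MemS (min (i.1 + 1) (2 * n - (i.1 + 1)) + 1) (us i) then
          ∏ i : Fin (2 * n - 1),
            Nat.card {T : SemistandardYoungTableau (lam i).transpose //
              IsReducedWord (us i) (colWord T)}
        else 0 := by
  have h := main_aux (2 * n - 1) n (fun i => min (i.1 + 1) (2 * n - (i.1 + 1)))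
    (fun i => by omega) w lam
  unfold Pfact at h
  convert h

end SchubertQuiver
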